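/- For any matrices U, X ∈ ℝ^{p×r}, one has dist²(U, X) ≤ ‖UU^⊤ − XX^⊤‖_F² / (2(√2 − 1) σ_r(X)²), where dist(U, X) = min over orthogonal matrices O ∈ O(r) of ‖UO − X‖_F and σ_r(X) is the smallest singular value of X. -/

import Mathlib

open Matrix

/-- Squared Frobenius norm. -/
noncomputable def frobSq {m n : ℕ} (M : Matrix (Fin m) (Fin n) ℝ) : ℝ :=
  ∑ i, ∑ j, (M i j) ^ 2

/-- Frobenius norm. -/
noncomputable def frobNorm {m n : ℕ} (M : Matrix (Fin m) (Fin n) ℝ) : ℝ :=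
  Real.sqrt (frobSq M)

/-- `dist(U, X) = inf over orthogonal O of ‖U O − X‖_F`. -/
noncomputable def orthoDist {p r : ℕ} (U X : Matrix (Fin p) (Fin r) ℝ) : ℝ :=
  ⨅ O : Matrix.orthogonalGroup (Fin r) ℝ, frobNorm (U * (O : Matrix (Fin r) (Fin r) ℝ) - X)

/-- `dist²(U, X) ≤ ‖UUᵀ − XXᵀ‖_F² / (2(√2 − 1) σ_r(X)²)`, where `σ_r(X)` is the
smallest singular value of `X`, characterized here by the Rayleigh-quotient lower
bound `σ² ‖w‖² ≤ ‖X w‖²` for all `w`. -/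

lemma frobSq_nonneg {m n : ℕ} (M : Matrix (Fin m) (Fin n) ℝ) : 0 ≤ frobSq M :=
  Finset.sum_nonneg fun _ _ => Finset.sum_nonneg fun _ _ => sq_nonneg _

lemma frobSq_eq_trace {m n : ℕ} (M : Matrix (Fin m) (Fin n) ℝ) :
    frobSq M = Matrix.trace (Mᵀ * M) := by
  unfold frobSq Matrix.trace
  rw [Finset.sum_comm]
  refine Finset.sum_congr rfl fun j _ => ?_
  simp [Matrix.mul_apply, Matrix.diag, sq]

lemma trace_sq_of_symm {n : ℕ} (S : Matrix (Fin n) (Fin n) ℝ) (hS : Sᵀ = S) :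
    Matrix.trace (S * S) = frobSq S := by
  rw [frobSq_eq_trace, hS]

lemma trace_mul_cs {n : ℕ} (A B : Matrix (Fin n) (Fin n) ℝ) :
    (Matrix.trace (A * B))^2 ≤ frobSq A * frobSq B := by
  have h1 : Matrix.trace (A * B) = ∑ x : Fin n × Fin n, A x.1 x.2 * B x.2 x.1 := by
    rw [Fintype.sum_prod_type]
    unfold Matrix.trace
    exact Finset.sum_congr rfl fun i _ => by simp [Matrix.mul_apply, Matrix.diag]
  have h2 : frobSq A = ∑ x : Fin n × Fin n, (A x.1 x.2)^2 := by
    rw [Fintype.sum_prod_type]; rfl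
  have h3 : frobSq B = ∑ x : Fin n × Fin n, (B x.2 x.1)^2 := by
    rw [frobSq, Finset.sum_comm, Fintype.sum_prod_type]
  rw [h1, h2, h3]
  exact Finset.sum_mul_sq_le_sq_mul_sq _ _ _

lemma star_eq_tr {n : ℕ} (A : Matrix (Fin n) (Fin n) ℝ) : star A = Aᵀ := by
  ext i j
  simp [Matrix.star_apply]

lemma vmv_mul_vmv {n : ℕ} (v : Fin n → ℝ) :
    vecMulVec v v * vecMulVec v v = (∑ k, v k * v k) • vecMulVec v v := by
  ext i j
  simp only [Matrix.mul_apply, Matrix.vecMulVec_apply, Matrix.smul_apply, smul_eq_mul,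
    Finset.sum_mul]
  exact Finset.sum_congr rfl fun k _ => by ring

lemma refl_mem {n : ℕ} (v : Fin n → ℝ) (hv : ∑ k, v k * v k = 1) :
    (1 - (2:ℝ) • vecMulVec v v) ∈ Matrix.orthogonalGroup (Fin n) ℝ := by
  rw [Matrix.mem_orthogonalGroup_iff']
  have hsymm : (vecMulVec v v)ᵀ = vecMulVec v v := by
    ext i j; simp [Matrix.vecMulVec_apply, mul_comm]
  rw [Matrix.transpose_sub, Matrix.transpose_one, Matrix.transpose_smul, hsymm]
  have h : (1 - (2:ℝ) • vecMulVec v v) * (1 - (2:ℝ) • vecMulVec v v)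
      = 1 - (4:ℝ) • vecMulVec v v + (4:ℝ) • (vecMulVec v v * vecMulVec v v) := by
    simp only [sub_mul, mul_sub, one_mul, mul_one, smul_mul_assoc, mul_smul_comm, smul_smul]
    module
  rw [h, vmv_mul_vmv, hv, one_smul]
  abel

lemma star_eq_tr' {n : ℕ} (A : Matrix (Fin n) (Fin n) ℝ) : star A = Aᵀ := by
  ext i j; simp [Matrix.star_apply]

lemma basis_transpose {n : ℕ} (i j : Fin n) :
    (single i j (1:ℝ))ᵀ = single j i (1:ℝ) := by
  ext a b
  simp only [Matrix.transpose_apply, Matrix.single, Matrix.of_apply]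
  by_cases h1 : i = b <;> by_cases h2 : j = a <;> simp [h1, h2]

lemma trace_mul_basis {n : ℕ} (W : Matrix (Fin n) (Fin n) ℝ) (i j : Fin n) :
    Matrix.trace (W * single i j (1:ℝ)) = W j i := by
  unfold Matrix.trace
  rw [Finset.sum_eq_single j]
  · simp [Matrix.diag]
  · intro b _ hb
    simp only [Matrix.diag_apply]
    rw [Matrix.mul_single_apply_of_ne (hbj := hb)]
  · simp

lemma rot_mem {n : ℕ} (i j : Fin n) (hij : i ≠ j) (c s : ℝ) (hcs : c^2 + s^2 = 1) :
    (1 + (c-1) • (single i i (1:ℝ) + single j j 1)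
       + s • (single i j (1:ℝ) - single j i 1))
      ∈ Matrix.orthogonalGroup (Fin n) ℝ := by
  set P : Matrix (Fin n) (Fin n) ℝ := single i i (1:ℝ) + single j j 1 with hP
  set J : Matrix (Fin n) (Fin n) ℝ := single i j (1:ℝ) - single j i 1 with hJ
  have z1 : ∀ a l : Fin n, single a i (1:ℝ) * single j l 1 = 0 :=
    fun a l => Matrix.single_mul_single_of_ne (c := 1) a i j hij 1
  have z2 : ∀ a l : Fin n, single a j (1:ℝ) * single i l 1 = 0 :=
    fun a l => Matrix.single_mul_single_of_ne (c := 1) a j i hij.symm 1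
  have hPP : P * P = P := by
    simp [hP, add_mul, mul_add, z1, z2]
  have hPJ : P * J = J := by
    simp [hP, hJ, add_mul, mul_add, mul_sub, z1, z2]
  have hJP : J * P = J := by
    simp [hP, hJ, add_mul, sub_mul, mul_add, z1, z2]
    abel
  have hJJ : J * J = -P := by
    simp [hP, hJ, sub_mul, mul_sub, z1, z2]
    abel
  have hPt : Pᵀ = P := by rw [hP, Matrix.transpose_add, basis_transpose, basis_transpose]
  have hJt : Jᵀ = -J := by
    rw [hJ, Matrix.transpose_sub, basis_transpose, basis_transpose]; abel
  rw [Matrix.mem_orthogonalGroup_iff']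
  have hstar : (1 + (c-1) • P + s • J)ᵀ = 1 + (c-1) • P - s • J := by
    simp [Matrix.transpose_add, Matrix.transpose_smul, hPt, hJt, sub_eq_add_neg]
  rw [hstar]
  have hexpand : (1 + (c-1) • P - s • J) * (1 + (c-1) • P + s • J)
      = 1 + ((c-1)*(c-1) + 2*(c-1) + s*s) • P := by
    simp only [add_mul, mul_add, sub_mul, mul_sub, one_mul, mul_one,
      smul_mul_assoc, mul_smul_comm, smul_smul, hPP, hPJ, hJP, hJJ, smul_neg]
    module
  rw [hexpand]
  have : (c-1)*(c-1) + 2*(c-1) + s*s = 0 := by nlinarith [hcs]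
  rw [this, zero_smul, add_zero]

lemma trace_mul_vmv {n : ℕ} (W : Matrix (Fin n) (Fin n) ℝ) (v : Fin n → ℝ) :
    Matrix.trace (W * vecMulVec v v) = ∑ a, ∑ b, v a * W a b * v b := by
  unfold Matrix.trace
  simp only [Matrix.diag_apply, Matrix.mul_apply, Matrix.vecMulVec_apply]
  exact Finset.sum_congr rfl fun a _ => Finset.sum_congr rfl fun b _ => by ring

lemma quadform_nonneg {n : ℕ} (W : Matrix (Fin n) (Fin n) ℝ)
    (hmax : ∀ R ∈ Matrix.orthogonalGroup (Fin n) ℝ,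
      Matrix.trace (W * R) ≤ Matrix.trace W) :
    ∀ v : Fin n → ℝ, 0 ≤ ∑ a, ∑ b, v a * W a b * v b := by
  have key : ∀ v : Fin n → ℝ, (∑ k, v k * v k = 1) →
      0 ≤ ∑ a, ∑ b, v a * W a b * v b := by
    intro v hv
    have h := hmax _ (refl_mem v hv)
    rw [Matrix.mul_sub, Matrix.mul_one, Matrix.trace_sub, Matrix.mul_smul,
      Matrix.trace_smul, trace_mul_vmv, smul_eq_mul] at h
    linarith
  intro v
  set m := ∑ k, v k * v k with hm
  have hmnn : 0 ≤ m := Finset.sum_nonneg fun k _ => mul_self_nonneg _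
  rcases eq_or_lt_of_le hmnn with hm0 | hmpos
  · have hz : ∀ k, v k = 0 := by
      intro k
      have h := (Finset.sum_eq_zero_iff_of_nonneg
        (fun k _ => mul_self_nonneg (v k))).mp hm0.symm k (Finset.mem_univ k)
      nlinarith [h]
    simp [hz]
  · set t : ℝ := (Real.sqrt m)⁻¹ with ht
    have hsq : Real.sqrt m * Real.sqrt m = m := Real.mul_self_sqrt hmnn
    have hspos : 0 < Real.sqrt m := Real.sqrt_pos.mpr hmpos
    have htt : t * t * m = 1 := by
      rw [ht, ← mul_inv, hsq]
      field_simp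
    have hunit : ∑ k, (t * v k) * (t * v k) = 1 := by
      have : ∑ k, (t * v k) * (t * v k) = t * t * m := by
        rw [hm, Finset.mul_sum]
        exact Finset.sum_congr rfl fun k _ => by ring
      rw [this, htt]
    have h := key (fun k => t * v k) hunit
    have hscale : ∑ a, ∑ b, (t * v a) * W a b * (t * v b)
        = (t * t) * ∑ a, ∑ b, v a * W a b * v b := by
      rw [Finset.mul_sum]
      refine Finset.sum_congr rfl fun a _ => ?_
      rw [Finset.mul_sum]
      exact Finset.sum_congr rfl fun b _ => by ring
    rw [hscale] at h
    have htpos : 0 < t * t := by positivity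
    exact (mul_nonneg_iff_of_pos_left htpos).mp h

lemma symm_of_max {n : ℕ} (W : Matrix (Fin n) (Fin n) ℝ)
    (hmax : ∀ R ∈ Matrix.orthogonalGroup (Fin n) ℝ,
      Matrix.trace (W * R) ≤ Matrix.trace W) :
    Wᵀ = W := by
  ext i j
  rw [Matrix.transpose_apply]
  rcases eq_or_ne i j with rfl | hij
  · rfl
  · -- show W j i = W i j using rotations in the (j,i)-plane?  use plane (i,j):
    -- we prove b := W j i - W i j = 0
    set a := W i i + W j j with ha
    set b := W j i - W i j with hb
    set h0 := Real.sqrt (a^2 + b^2) with hh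
    have hhnn : 0 ≤ h0 := Real.sqrt_nonneg _
    have hsq : h0 * h0 = a^2 + b^2 := Real.mul_self_sqrt (by positivity)
    rcases eq_or_lt_of_le hhnn with hz | hpos
    · have : a^2 + b^2 = 0 := by rw [← hsq, ← hz]; ring
      have hb0 : b = 0 := by nlinarith [sq_nonneg a, sq_nonneg b]
      rw [hb] at hb0; linarith
    · set c := a / h0 with hc
      set s := b / h0 with hs
      have hcs : c^2 + s^2 = 1 := by
        rw [hc, hs]
        field_simp
        nlinarith [hsq]
      have hmem := rot_mem i j hij c s hcs
      have h := hmax _ hmem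
      rw [Matrix.mul_add, Matrix.mul_add, Matrix.mul_one, Matrix.mul_smul, Matrix.mul_smul,
        Matrix.trace_add, Matrix.trace_add, Matrix.trace_smul, Matrix.trace_smul,
        Matrix.mul_add, Matrix.trace_add, Matrix.mul_sub, Matrix.trace_sub,
        trace_mul_basis, trace_mul_basis, trace_mul_basis, trace_mul_basis,
        smul_eq_mul, smul_eq_mul] at h
    -- h : trace W + (c-1)*(W i i + W j j) + s*(W j i - W i j) ≤ trace W
      have hkey : (c - 1) * a + s * b ≤ 0 := by rw [ha, hb]; linarith
      have hexp : (c - 1) * a + s * b = h0 - a := by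
        rw [hc, hs]
        field_simp
        nlinarith [hsq]
      rw [hexp] at hkey
      -- h0 ≤ a, so a ≥ 0, h0^2 ≤ a^2, b^2 ≤ 0, b = 0
      have hb0 : b = 0 := by nlinarith [hsq, hkey, hhnn]
      rw [hb] at hb0; linarith

lemma mem_orth_iff {r : ℕ} (Q : Matrix (Fin r) (Fin r) ℝ) :
    Q ∈ Matrix.orthogonalGroup (Fin r) ℝ ↔
      ∀ i j, ∑ k, Q k i * Q k j = if i = j then (1:ℝ) else 0 := by
  rw [Matrix.mem_orthogonalGroup_iff']
  constructor
  · intro h i j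
    have := congrFun (congrFun h i) j
    simpa [Matrix.mul_apply, Matrix.one_apply] using this
  · intro h
    ext i j
    simpa [Matrix.mul_apply, Matrix.one_apply] using h i j

lemma exists_max_trace {r : ℕ} (B : Matrix (Fin r) (Fin r) ℝ) :
    ∃ Q ∈ Matrix.orthogonalGroup (Fin r) ℝ, ∀ P ∈ Matrix.orthogonalGroup (Fin r) ℝ,
      Matrix.trace (B * P) ≤ Matrix.trace (B * Q) := by
  set s : Set (Matrix (Fin r) (Fin r) ℝ) := {Q | Q ∈ Matrix.orthogonalGroup (Fin r) ℝ} with hs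
  have hclosed : IsClosed s := by
    have : s = ⋂ i, ⋂ j, {Q : Matrix (Fin r) (Fin r) ℝ |
        ∑ k, Q k i * Q k j = if i = j then (1:ℝ) else 0} := by
      ext Q; simp [hs, mem_orth_iff]
    rw [this]
    refine isClosed_iInter fun i => isClosed_iInter fun j => isClosed_eq ?_ continuous_const
    exact continuous_finset_sum _ fun k _ => by fun_prop
  have hsub : s ⊆ Set.pi Set.univ fun _ : Fin r =>
      Set.pi Set.univ fun _ : Fin r => Set.Icc (-1:ℝ) 1 := by
    intro Q hQ
    have h := (mem_orth_iff Q).mp hQ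
    intro i _ j _
    have h1 : ∑ k, Q k j * Q k j = 1 := by simpa using h j j
    have h2 : Q i j ^ 2 ≤ 1 := by
      rw [← h1]
      have : ∀ k ∈ Finset.univ, (0:ℝ) ≤ Q k j * Q k j := fun k _ => mul_self_nonneg _
      calc Q i j ^2 = Q i j * Q i j := sq (Q i j) ▸ by ring
        _ ≤ ∑ k, Q k j * Q k j := Finset.single_le_sum this (Finset.mem_univ i)
    constructor <;> nlinarith [h2]
  have hcomp : IsCompact s := by
    refine IsCompact.of_isClosed_subset ?_ hclosed hsub
    exact isCompact_univ_pi fun _ => isCompact_univ_pi fun _ => isCompact_Icc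
  have hcont : Continuous fun Q : Matrix (Fin r) (Fin r) ℝ => Matrix.trace (B * Q) := by
    have : (fun Q : Matrix (Fin r) (Fin r) ℝ => Matrix.trace (B * Q))
        = fun Q => ∑ i, ∑ k, B i k * Q k i := by
      funext Q
      unfold Matrix.trace
      exact Finset.sum_congr rfl fun i _ => by simp [Matrix.mul_apply, Matrix.diag]
    rw [this]
    exact continuous_finset_sum _ fun i _ => continuous_finset_sum _ fun k _ => by fun_prop
  have h1s : (1 : Matrix (Fin r) (Fin r) ℝ) ∈ s := one_mem (Matrix.orthogonalGroup (Fin r) ℝ)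
  obtain ⟨Q, hQs, hQmax⟩ := hcomp.exists_isMaxOn ⟨1, h1s⟩
    hcont.continuousOn
  exact ⟨Q, hQs, fun P hP => hQmax hP⟩

lemma tr4 {p r : ℕ} (A : Matrix (Fin p) (Fin r) ℝ) (B : Matrix (Fin r) (Fin p) ℝ)
    (C : Matrix (Fin p) (Fin r) ℝ) (D : Matrix (Fin r) (Fin p) ℝ) :
    Matrix.trace (A * B * (C * D)) = Matrix.trace ((B * C) * (D * A)) := by
  rw [show A * B * (C * D) = A * (B * C) * D by simp only [Matrix.mul_assoc],
    Matrix.trace_mul_cycle, Matrix.trace_mul_comm]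



lemma orthoDist_nonneg {p r : ℕ} (U X : Matrix (Fin p) (Fin r) ℝ) : 0 ≤ orthoDist U X :=
  Real.iInf_nonneg fun _ => Real.sqrt_nonneg _

lemma orthoDist_le {p r : ℕ} (U X : Matrix (Fin p) (Fin r) ℝ)
    (Q : Matrix (Fin r) (Fin r) ℝ) (hQ : Q ∈ Matrix.orthogonalGroup (Fin r) ℝ) :
    orthoDist U X ≤ frobNorm (U * Q - X) := by
  have hbdd : BddBelow (Set.range fun O : Matrix.orthogonalGroup (Fin r) ℝ =>
      frobNorm (U * (O : Matrix (Fin r) (Fin r) ℝ) - X)) := by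
    refine ⟨0, ?_⟩
    rintro x ⟨O, rfl⟩
    exact Real.sqrt_nonneg _
  exact ciInf_le hbdd (⟨Q, hQ⟩ : Matrix.orthogonalGroup (Fin r) ℝ)

lemma scalar_ineq (a b g c d σ : ℝ) (ha : 0 ≤ a) (hb : 0 ≤ b) (hd : 0 ≤ d)
    (hcg : -g ≤ c) (hcs : -(Real.sqrt a * Real.sqrt b) ≤ c)
    (hg : σ^2 * d ≤ g) :
    2 * (Real.sqrt 2 - 1) * (σ^2 * d) ≤ a + 2*b + 2*g + 4*c := by
  set s2 := Real.sqrt 2 with hs2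
  have h2 : s2^2 = 2 := Real.sq_sqrt (by norm_num)
  have h2nn : 0 ≤ s2 := Real.sqrt_nonneg 2
  have h2a : 1 ≤ s2 := by nlinarith
  have h2b : s2 ≤ 2 := by nlinarith
  set sa := Real.sqrt a with hsa
  set sb := Real.sqrt b with hsb
  have hsa2 : sa^2 = a := Real.sq_sqrt ha
  have hsb2 : sb^2 = b := Real.sq_sqrt hb
  have h1 : 0 ≤ (4 - 2*s2) * (c + g) := mul_nonneg (by nlinarith) (by linarith)
  have h2' : 0 ≤ (2*s2) * (c + sa*sb) := mul_nonneg (by nlinarith) (by linarith)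
  have h3 : 0 ≤ (2*s2 - 2) * (g - σ^2*d) := mul_nonneg (by nlinarith) (by linarith)
  nlinarith [sq_nonneg (sa - s2*sb), h1, h2', h3, hsa2, hsb2, h2]

lemma expand_frobSq {p r : ℕ} (D X : Matrix (Fin p) (Fin r) ℝ) :
    frobSq (D * Dᵀ + (D * Xᵀ + X * Dᵀ)) =
      Matrix.trace ((Dᵀ*D) * (Dᵀ*D)) + 4 * Matrix.trace ((Dᵀ*D) * (Xᵀ*D))
        + 2 * Matrix.trace ((Xᵀ*D) * (Xᵀ*D)) + 2 * Matrix.trace ((Dᵀ*D) * (Xᵀ*X)) := by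
  rw [frobSq_eq_trace]
  have hMt : (D * Dᵀ + (D * Xᵀ + X * Dᵀ))ᵀ = D * Dᵀ + (X * Dᵀ + D * Xᵀ) := by
    simp only [Matrix.transpose_add, Matrix.transpose_mul, Matrix.transpose_transpose]
  rw [hMt]
  simp only [Matrix.add_mul, Matrix.mul_add, Matrix.trace_add]
  rw [tr4 D Dᵀ D Dᵀ, tr4 D Dᵀ D Xᵀ, tr4 D Dᵀ X Dᵀ, tr4 X Dᵀ D Dᵀ, tr4 X Dᵀ D Xᵀ,
    tr4 X Dᵀ X Dᵀ, tr4 D Xᵀ D Dᵀ, tr4 D Xᵀ D Xᵀ, tr4 D Xᵀ X Dᵀ]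
  have e1 : Matrix.trace ((Dᵀ*X) * (Dᵀ*D)) = Matrix.trace ((Dᵀ*D) * (Xᵀ*D)) := by
    conv_lhs => rw [show (Dᵀ*X) = (Xᵀ*D)ᵀ by simp [Matrix.transpose_mul],
      show (Dᵀ*D) = (Dᵀ*D)ᵀ by simp [Matrix.transpose_mul]]
    rw [Matrix.trace_transpose_mul, Matrix.trace_mul_comm]
  have e2 : Matrix.trace ((Dᵀ*D) * (Dᵀ*X)) = Matrix.trace ((Dᵀ*D) * (Xᵀ*D)) := by
    rw [Matrix.trace_mul_comm, e1]
  have e3 : Matrix.trace ((Dᵀ*X) * (Dᵀ*X)) = Matrix.trace ((Xᵀ*D) * (Xᵀ*D)) := by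
    rw [show (Dᵀ*X) = (Xᵀ*D)ᵀ by simp [Matrix.transpose_mul], Matrix.trace_transpose_mul]
  have e4 : Matrix.trace ((Xᵀ*X) * (Dᵀ*D)) = Matrix.trace ((Dᵀ*D) * (Xᵀ*X)) :=
    Matrix.trace_mul_comm _ _
  have e5 : Matrix.trace ((Xᵀ*D) * (Dᵀ*D)) = Matrix.trace ((Dᵀ*D) * (Xᵀ*D)) :=
    Matrix.trace_mul_comm _ _
  rw [e1, e2, e3, e4, e5]
  ring

theorem orthoDist_sq_le {p r : ℕ} (U X : Matrix (Fin p) (Fin r) ℝ) (σ : ℝ)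
    (hσpos : 0 < σ)
    (hσ : ∀ w : Fin r → ℝ, σ ^ 2 * (∑ i, (w i) ^ 2) ≤ ∑ j, ((X *ᵥ w) j) ^ 2) :
    (orthoDist U X) ^ 2 ≤
      frobSq (U * U.transpose - X * X.transpose) / (2 * (Real.sqrt 2 - 1) * σ ^ 2) := by
  obtain ⟨Q, hQmem, hQmax⟩ := exists_max_trace (Xᵀ * U)
  set D : Matrix (Fin p) (Fin r) ℝ := U * Q - X with hD
  set K : Matrix (Fin r) (Fin r) ℝ := Dᵀ * D with hK
  set S : Matrix (Fin r) (Fin r) ℝ := Xᵀ * D with hS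
  set G : Matrix (Fin r) (Fin r) ℝ := Xᵀ * X with hG
  set W : Matrix (Fin r) (Fin r) ℝ := Xᵀ * U * Q with hW
  have hQQt : Q * Qᵀ = 1 := by
    have h : Q ∈ Matrix.orthogonalGroup (Fin r) ℝ := hQmem
    rw [Matrix.mem_orthogonalGroup_iff] at h
    exact h
  have hWmax : ∀ R ∈ Matrix.orthogonalGroup (Fin r) ℝ,
      Matrix.trace (W * R) ≤ Matrix.trace W := by
    intro R hR
    have h := hQmax (Q * R) (mul_mem hQmem hR)
    simpa [hW, Matrix.mul_assoc] using h
  have hWsymm := symm_of_max W hWmax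
  have hWquad := quadform_nonneg W hWmax
  have hSW : S = W - G := by
    rw [hS, hD, Matrix.mul_sub, hW, hG, Matrix.mul_assoc]
  have hGsymm : Gᵀ = G := by rw [hG]; simp [Matrix.transpose_mul]
  have hSsymm : Sᵀ = S := by rw [hSW, Matrix.transpose_sub, hWsymm, hGsymm]
  have hKsymm : Kᵀ = K := by rw [hK]; simp [Matrix.transpose_mul]
  have hM : U * Uᵀ - X * Xᵀ = D * Dᵀ + (D * Xᵀ + X * Dᵀ) := by
    have hUX : D + X = U * Q := by rw [hD]; abel
    have hUU : U * Uᵀ = (D + X) * (D + X)ᵀ := by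
      rw [hUX, Matrix.transpose_mul,
        show U * Q * (Qᵀ * Uᵀ) = U * (Q * Qᵀ) * Uᵀ by simp [Matrix.mul_assoc],
        hQQt, Matrix.mul_one]
    rw [hUU]
    simp only [Matrix.transpose_add, Matrix.add_mul, Matrix.mul_add]
    abel
  have hfa : Matrix.trace (K*K) = frobSq K := trace_sq_of_symm K hKsymm
  have hfb : Matrix.trace (S*S) = frobSq S := trace_sq_of_symm S hSsymm
  have hKW : 0 ≤ Matrix.trace (K * W) := by
    have h1 : Matrix.trace (K * W) = Matrix.trace ((D * W) * Dᵀ) := by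
      rw [hK, Matrix.mul_assoc, Matrix.trace_mul_comm, Matrix.mul_assoc]
    rw [h1]
    unfold Matrix.trace
    refine Finset.sum_nonneg fun i _ => ?_
    have hq := hWquad (fun aa => D i aa)
    have hdiag : ((D * W) * Dᵀ).diag i = ∑ aa, ∑ bb, D i aa * W aa bb * D i bb := by
      simp only [Matrix.diag_apply, Matrix.mul_apply, Matrix.transpose_apply,
        Finset.sum_mul]
      rw [Finset.sum_comm]
    rw [hdiag]
    exact hq
  have hcg : -(Matrix.trace (K*G)) ≤ Matrix.trace (K*S) := by
    have h1 : Matrix.trace (K*S) + Matrix.trace (K*G) = Matrix.trace (K*W) := by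
      rw [hSW, Matrix.mul_sub, Matrix.trace_sub]
      ring
    linarith
  have hcs : -(Real.sqrt (frobSq K) * Real.sqrt (frobSq S)) ≤ Matrix.trace (K*S) := by
    have h := trace_mul_cs K S
    have hmm : 0 ≤ Real.sqrt (frobSq K) * Real.sqrt (frobSq S) :=
      mul_nonneg (Real.sqrt_nonneg _) (Real.sqrt_nonneg _)
    have hmsq : (Real.sqrt (frobSq K) * Real.sqrt (frobSq S))^2 = frobSq K * frobSq S := by
      rw [mul_pow, Real.sq_sqrt (frobSq_nonneg K), Real.sq_sqrt (frobSq_nonneg S)]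
    nlinarith [h, hmm, hmsq]
  have hgd : σ^2 * frobSq D ≤ Matrix.trace (K*G) := by
    have h1 : Matrix.trace (K*G) = frobSq (X * Dᵀ) := by
      rw [frobSq_eq_trace, show (X*Dᵀ)ᵀ = D*Xᵀ by simp [Matrix.transpose_mul],
        tr4 D Xᵀ X Dᵀ, Matrix.trace_mul_comm, hK, hG]
    rw [h1]
    show σ^2 * frobSq D ≤ ∑ j, ∑ i, ((X*Dᵀ) j i)^2
    rw [Finset.sum_comm, frobSq, Finset.mul_sum]
    refine Finset.sum_le_sum fun i _ => ?_
    have h2 := hσ (fun a => D i a)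
    have h3 : ∀ j, (X*Dᵀ) j i = (X *ᵥ fun a => D i a) j := by
      intro j
      simp [Matrix.mul_apply, Matrix.mulVec, dotProduct]
    calc σ^2 * ∑ a, (D i a)^2 ≤ ∑ j, ((X *ᵥ fun a => D i a) j)^2 := h2
      _ = ∑ j, ((X*Dᵀ) j i)^2 := by
          exact Finset.sum_congr rfl fun j _ => by rw [h3 j]
  have hexp : frobSq (U*Uᵀ - X*Xᵀ) = Matrix.trace (K*K) + 4*Matrix.trace (K*S)
      + 2*Matrix.trace (S*S) + 2*Matrix.trace (K*G) := by
    rw [hM, expand_frobSq, hK, hS, hG]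
  have hmain := scalar_ineq (Matrix.trace (K*K)) (Matrix.trace (S*S))
    (Matrix.trace (K*G)) (Matrix.trace (K*S)) (frobSq D) σ
    (by rw [hfa]; exact frobSq_nonneg K) (by rw [hfb]; exact frobSq_nonneg S)
    (frobSq_nonneg D) hcg (by rw [hfa, hfb]; exact hcs) hgd
  have hsqrt2 : 1 < Real.sqrt 2 := by
    nlinarith [Real.sq_sqrt (show (0:ℝ) ≤ 2 by norm_num), Real.sqrt_nonneg 2]
  have hden : 0 < 2 * (Real.sqrt 2 - 1) * σ^2 := by
    have : 0 < σ^2 := by positivity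
    nlinarith
  have hod : orthoDist U X ^ 2 ≤ frobSq D := by
    have h1 := orthoDist_le U X Q hQmem
    calc orthoDist U X ^2 ≤ frobNorm (U*Q - X)^2 :=
          pow_le_pow_left₀ (orthoDist_nonneg U X) h1 2
      _ = frobSq D := by rw [frobNorm, Real.sq_sqrt (frobSq_nonneg _), hD]
  rw [le_div_iff₀ hden]
  calc orthoDist U X ^2 * (2 * (Real.sqrt 2 - 1) * σ^2)
      ≤ frobSq D * (2 * (Real.sqrt 2 - 1) * σ^2) := by
        exact mul_le_mul_of_nonneg_right hod hden.le
    _ = 2 * (Real.sqrt 2 - 1) * (σ^2 * frobSq D) := by ring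
    _ ≤ Matrix.trace (K*K) + 2*Matrix.trace (S*S) + 2*Matrix.trace (K*G)
          + 4*Matrix.trace (K*S) := hmain
    _ = frobSq (U*Uᵀ - X*Xᵀ) := by rw [hexp]; ring
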